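/- Let A = V/Λ be a real torus with an induced involution τ_A coming from a linear involution τ_V preserving Λ. Two fixed points [v], [w] of τ_A lie in the same connected component of the fixed-point set if and only if (v − τ_V v) and (w − τ_V w) differ by an element of (id − τ_V)(Λ) = {λ − τ_V λ : λ ∈ Λ}. Consequently the set of connected components of Fix(τ_A) injects into Λ₋/(id − τ_V)(Λ). -/

import Mathlib

/-- For a real torus `A = V/Λ` with involution `τ_A` induced by a linear involution
`τ` preserving the full lattice `Λ`: two fixed points `[v]`, `[w]` of `τ_A` lie in
the same connected component of the fixed-point set iff `(v - τv) - (w - τw)`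
lies in `(id - τ)(Λ)`; consequently the set of connected components of
`Fix(τ_A)` injects into `Λ₋/(id - τ)(Λ)` via `[v] ↦ [v - τ v]`. -/
theorem stmt_14 (V : Type*) [NormedAddCommGroup V] [NormedSpace ℝ V]
    [FiniteDimensional ℝ V]
    (Λ : AddSubgroup V) (hfull : Submodule.span ℝ (Λ : Set V) = ⊤)
    (hdisc : DiscreteTopology Λ)
    (τ : V →ₗ[ℝ] V) (hτ : τ ∘ₗ τ = LinearMap.id)
    (hΛ : Λ ≤ Λ.comap τ.toAddMonoidHom)
    (Λm : AddSubgroup V) (hΛm : ∀ x : V, x ∈ Λm ↔ (x ∈ Λ ∧ τ x = -x))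
    (N : AddSubgroup V) (hN : ∀ x : V, x ∈ N ↔ ∃ l ∈ Λ, x = l - τ l)
    (F : Set (V ⧸ Λ))
    (hF : F = {p | QuotientAddGroup.map Λ Λ τ.toAddMonoidHom hΛ p = p}) :
    (∀ v w : V,
      (QuotientAddGroup.mk v : V ⧸ Λ) ∈ F → (QuotientAddGroup.mk w : V ⧸ Λ) ∈ F →
      (connectedComponentIn F (QuotientAddGroup.mk v) =
          connectedComponentIn F (QuotientAddGroup.mk w) ↔
        (v - τ v) - (w - τ w) ∈ N)) ∧
    ∃ ψ : ConnectedComponents F → Λm ⧸ N.addSubgroupOf Λm,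
      Function.Injective ψ ∧
      ∀ (v : V) (hv : (QuotientAddGroup.mk v : V ⧸ Λ) ∈ F)
        (x : Λm) (_ : (x : V) = v - τ v),
        ψ (ConnectedComponents.mk ⟨QuotientAddGroup.mk v, hv⟩) =
          QuotientAddGroup.mk x := by
  classical
  have hττ : ∀ x, τ (τ x) = x := fun x => by
    have := LinearMap.ext_iff.mp hτ x
    simpa using this
  -- membership in `F` in terms of representatives
  have memF : ∀ v : V, ((QuotientAddGroup.mk v : V ⧸ Λ) ∈ F) ↔ v - τ v ∈ Λm := by
    intro v
    rw [hF, Set.mem_setOf_eq, QuotientAddGroup.map_mk, QuotientAddGroup.eq_iff_sub_mem]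
    simp only [LinearMap.toAddMonoidHom_coe]
    rw [hΛm]
    constructor
    · intro h
      refine ⟨by simpa using Λ.neg_mem h, ?_⟩
      rw [map_sub, hττ]
      abel
    · intro ⟨h, _⟩
      simpa using Λ.neg_mem h
  -- two representatives of the same point give `N`-equivalent elements
  have keyN : ∀ v w : V, (QuotientAddGroup.mk v : V ⧸ Λ) = QuotientAddGroup.mk w →
      (v - τ v) - (w - τ w) ∈ N := by
    intro v w h
    rw [QuotientAddGroup.eq_iff_sub_mem] at h
    rw [hN]
    exact ⟨v - w, h, by rw [map_sub]; abel⟩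
  -- discreteness of the lattice
  obtain ⟨ε₀, hε₀, hΛdisc⟩ : ∃ ε > 0, ∀ x ∈ Λ, ‖x‖ < ε → x = 0 := by
    have hopen : IsOpen ({0} : Set Λ) := isOpen_discrete _
    rcases Metric.isOpen_iff.mp hopen 0 rfl with ⟨ε, hε, hball⟩
    refine ⟨ε, hε, fun x hx hn => ?_⟩
    have := hball (show (⟨x, hx⟩ : Λ) ∈ Metric.ball 0 ε by
      simpa [Subtype.dist_eq, dist_eq_norm] using hn)
    simpa [Subtype.ext_iff] using this
  -- the locally constant invariant
  have hmem : ∀ p : F, (p : V ⧸ Λ).out - τ (p : V ⧸ Λ).out ∈ Λm := by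
    intro p
    have : (QuotientAddGroup.mk ((p : V ⧸ Λ).out) : V ⧸ Λ) ∈ F := by
      rw [QuotientAddGroup.out_eq']; exact p.2
    exact (memF _).mp this
  set f : F → Λm ⧸ N.addSubgroupOf Λm := fun p =>
    QuotientAddGroup.mk ⟨(p : V ⧸ Λ).out - τ (p : V ⧸ Λ).out, hmem p⟩ with hf_def
  have f_spec : ∀ (p : F) (w : V), (QuotientAddGroup.mk w : V ⧸ Λ) = (p : V ⧸ Λ) →
      ∀ hm : w - τ w ∈ Λm, f p = QuotientAddGroup.mk ⟨w - τ w, hm⟩ := by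
    intro p w hw hm
    rw [hf_def]
    rw [QuotientAddGroup.eq_iff_sub_mem, AddSubgroup.mem_addSubgroupOf]
    have h1 : (QuotientAddGroup.mk ((p : V ⧸ Λ).out) : V ⧸ Λ) = QuotientAddGroup.mk w := by
      rw [QuotientAddGroup.out_eq', hw]
    simpa using keyN _ _ h1
  -- f is locally constant
  set T : V →L[ℝ] V := LinearMap.toContinuousLinearMap τ with hT_def
  have hT : ∀ x, T x = τ x := fun x => rfl
  have hlc : IsLocallyConstant f := by
    rw [IsLocallyConstant.iff_exists_open]
    intro p
    set v := (p : V ⧸ Λ).out with hv_def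
    have hC : (0 : ℝ) < 1 + ‖T‖ := by positivity
    set ε := ε₀ / (1 + ‖T‖) with hε_def
    have hεpos : 0 < ε := div_pos hε₀ hC
    refine ⟨Subtype.val ⁻¹' (QuotientAddGroup.mk '' Metric.ball v ε), ?_, ?_, ?_⟩
    · exact (QuotientAddGroup.isOpenMap_coe _ Metric.isOpen_ball).preimage
        continuous_subtype_val
    · exact ⟨v, Metric.mem_ball_self hεpos, QuotientAddGroup.out_eq' _⟩
    · rintro q ⟨w, hwball, hwmk⟩
      have hqF : (QuotientAddGroup.mk w : V ⧸ Λ) ∈ F := by rw [hwmk]; exact q.2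
      have hmw : w - τ w ∈ Λm := (memF _).mp hqF
      have hmv : v - τ v ∈ Λm := hmem p
      have hd : (w - τ w) - (v - τ v) ∈ Λ := ((hΛm _).mp (Λm.sub_mem hmw hmv)).1
      have hnorm : ‖(w - τ w) - (v - τ v)‖ < ε₀ := by
        have heq : (w - τ w) - (v - τ v) = (w - v) - τ (w - v) := by
          rw [map_sub]; abel
        rw [heq]
        calc ‖(w - v) - τ (w - v)‖ ≤ ‖w - v‖ + ‖τ (w - v)‖ := norm_sub_le _ _
          _ ≤ ‖w - v‖ + ‖T‖ * ‖w - v‖ := by gcongr; rw [← hT]; exact T.le_opNorm _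
          _ = (1 + ‖T‖) * ‖w - v‖ := by ring
          _ < (1 + ‖T‖) * ε := by
              gcongr
              rw [← dist_eq_norm]
              exact hwball
          _ = ε₀ := by rw [hε_def]; field_simp
      have h0 : (w - τ w) - (v - τ v) = 0 := hΛdisc _ hd hnorm
      have hwv : w - τ w = v - τ v := by
        have := sub_eq_zero.mp h0; exact this
      rw [f_spec q w hwmk hmw, f_spec p v (QuotientAddGroup.out_eq' _) hmv]
      congr 1
      exact Subtype.ext hwv
  -- backward direction: equal invariants give equal components
  have back : ∀ v w : V, (QuotientAddGroup.mk v : V ⧸ Λ) ∈ F →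
      (QuotientAddGroup.mk w : V ⧸ Λ) ∈ F → (v - τ v) - (w - τ w) ∈ N →
      connectedComponentIn F (QuotientAddGroup.mk v) =
        connectedComponentIn F (QuotientAddGroup.mk w) := by
    intro v w hv hw h
    rw [hN] at h
    obtain ⟨l, hl, hlEq⟩ := h
    set u := (w + l) - v with hu_def
    have hτu : τ u = u := by
      have h0 : u - τ u = 0 := by
        rw [hu_def, map_sub, map_add]
        have : (w + l - v) - (τ w + τ l - τ v) = ((w - τ w) + (l - τ l)) - (v - τ v) := by
          abel
        rw [this, ← hlEq]
        abel
      have := sub_eq_zero.mp h0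
      exact this.symm
    set S : Set (V ⧸ Λ) :=
      (fun t : ℝ => (QuotientAddGroup.mk (v + t • u) : V ⧸ Λ)) '' Set.Icc (0 : ℝ) 1 with hS_def
    have hScont : Continuous fun t : ℝ => (QuotientAddGroup.mk (v + t • u) : V ⧸ Λ) :=
      QuotientAddGroup.continuous_mk.comp
        (continuous_const.add ((continuous_id.smul continuous_const)))
    have hSconn : IsPreconnected S :=
      isPreconnected_Icc.image _ hScont.continuousOn
    have hSF : S ⊆ F := by
      rintro _ ⟨t, _, rfl⟩
      rw [memF]
      have : (v + t • u) - τ (v + t • u) = v - τ v := by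
        rw [map_add, map_smul, hτu]; abel
      rw [this]
      exact (memF v).mp hv
    have hvS : (QuotientAddGroup.mk v : V ⧸ Λ) ∈ S := by
      refine ⟨0, Set.left_mem_Icc.mpr zero_le_one, ?_⟩
      simp
    have hwS : (QuotientAddGroup.mk w : V ⧸ Λ) ∈ S := by
      refine ⟨1, Set.right_mem_Icc.mpr zero_le_one, ?_⟩
      have h1 : v + (1 : ℝ) • u = w + l := by rw [one_smul, hu_def]; abel
      show (QuotientAddGroup.mk (v + (1 : ℝ) • u) : V ⧸ Λ) = QuotientAddGroup.mk w
      rw [h1, QuotientAddGroup.eq_iff_sub_mem]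
      simpa using hl
    have hsub : S ⊆ connectedComponentIn F (QuotientAddGroup.mk v) :=
      hSconn.subset_connectedComponentIn hvS hSF
    exact connectedComponentIn_eq (hsub hwS)
  -- forward direction
  have fwd : ∀ v w : V, ∀ hv : (QuotientAddGroup.mk v : V ⧸ Λ) ∈ F,
      ∀ hw : (QuotientAddGroup.mk w : V ⧸ Λ) ∈ F,
      connectedComponentIn F (QuotientAddGroup.mk v) =
        connectedComponentIn F (QuotientAddGroup.mk w) →
      (v - τ v) - (w - τ w) ∈ N := by
    intro v w hv hw h
    have h2 : connectedComponent (⟨QuotientAddGroup.mk v, hv⟩ : F) =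
        connectedComponent (⟨QuotientAddGroup.mk w, hw⟩ : F) := by
      rw [connectedComponentIn_eq_image hv, connectedComponentIn_eq_image hw] at h
      exact Set.image_injective.mpr Subtype.val_injective h
    have h3 : f ⟨QuotientAddGroup.mk v, hv⟩ = f ⟨QuotientAddGroup.mk w, hw⟩ :=
      hlc.apply_eq_of_isPreconnected isPreconnected_connectedComponent
        mem_connectedComponent (h2 ▸ mem_connectedComponent)
    rw [f_spec _ v rfl ((memF v).mp hv), f_spec _ w rfl ((memF w).mp hw),
      QuotientAddGroup.eq_iff_sub_mem, AddSubgroup.mem_addSubgroupOf] at h3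
    simpa using h3
  refine ⟨fun v w hv hw => ⟨fwd v w hv hw, back v w hv hw⟩, ?_⟩
  -- the injection on connected components
  have hresp : ∀ a b : F, connectedComponent a = connectedComponent b → f a = f b := by
    intro a b hab
    exact hlc.apply_eq_of_isPreconnected isPreconnected_connectedComponent
      mem_connectedComponent (hab ▸ mem_connectedComponent)
  refine ⟨Quotient.lift f hresp, ?_, ?_⟩
  · intro c d hcd
    obtain ⟨x, rfl⟩ := ConnectedComponents.surjective_coe c
    obtain ⟨y, rfl⟩ := ConnectedComponents.surjective_coe d
    obtain ⟨v, hv⟩ := QuotientAddGroup.mk_surjective (x : V ⧸ Λ)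
    obtain ⟨w, hw⟩ := QuotientAddGroup.mk_surjective (y : V ⧸ Λ)
    have hvF : (QuotientAddGroup.mk v : V ⧸ Λ) ∈ F := hv ▸ x.2
    have hwF : (QuotientAddGroup.mk w : V ⧸ Λ) ∈ F := hw ▸ y.2
    have hcd' : f x = f y := hcd
    rw [f_spec x v hv ((memF v).mp hvF), f_spec y w hw ((memF w).mp hwF),
      QuotientAddGroup.eq_iff_sub_mem, AddSubgroup.mem_addSubgroupOf] at hcd'
    have hNmem : (v - τ v) - (w - τ w) ∈ N := by simpa using hcd'
    have hcc := back v w hvF hwF hNmem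
    have h2 : connectedComponent (⟨QuotientAddGroup.mk v, hvF⟩ : F) =
        connectedComponent (⟨QuotientAddGroup.mk w, hwF⟩ : F) := by
      rw [connectedComponentIn_eq_image hvF, connectedComponentIn_eq_image hwF] at hcc
      exact Set.image_injective.mpr Subtype.val_injective hcc
    have hx : x = (⟨QuotientAddGroup.mk v, hvF⟩ : F) := Subtype.ext hv.symm
    have hy : y = (⟨QuotientAddGroup.mk w, hwF⟩ : F) := Subtype.ext hw.symm
    rw [ConnectedComponents.coe_eq_coe, hx, hy]
    exact h2
  · intro v hv x hx
    have : Quotient.lift f hresp (ConnectedComponents.mk ⟨QuotientAddGroup.mk v, hv⟩) =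
        f ⟨QuotientAddGroup.mk v, hv⟩ := rfl
    rw [this, f_spec _ v rfl ((memF v).mp hv)]
    congr 1
    exact Subtype.ext hx.symm
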